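/- For all distinct x, y ∈ int(K), the Riemannian distance induced by a ν-self-concordant barrier F is bounded by the Hilbert metric: ρ(x, y) ≤ 2(1 + 3ν) · ln(1 + σ(x, y)); in particular ρ(x,y) ≤ 2(1+3ν)·σ(x,y). -/

import Mathlib

open MeasureTheory Filter

/-- The local norm `‖h‖_x = (D²F(x)[h,h])^{1/2}` induced by the Hessian of `F` at `x`. -/
noncomputable def localNorm {d : ℕ} (F : EuclideanSpace ℝ (Fin d) → ℝ)
    (x h : EuclideanSpace ℝ (Fin d)) : ℝ :=
  Real.sqrt (iteratedFDeriv ℝ 2 F x ![h, h])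

/-- The Riemannian length `∫₀¹ ‖γ'(t)‖_{γ(t)} dt` of a path `γ`. -/
noncomputable def pathLength {d : ℕ} (F : EuclideanSpace ℝ (Fin d) → ℝ)
    (γ : ℝ → EuclideanSpace ℝ (Fin d)) : ℝ :=
  ∫ t in Set.Icc (0 : ℝ) 1, localNorm F (γ t) (deriv γ t)

/-- The Riemannian distance `ρ(x, y)` on `K` induced by the Hessian metric of `F`:
the infimum of the lengths of continuously differentiable paths in `K` from `x` to `y`
lying in the interior of `K` except possibly at the endpoints. -/
noncomputable def riemannDist {d : ℕ} (F : EuclideanSpace ℝ (Fin d) → ℝ)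
    (K : Set (EuclideanSpace ℝ (Fin d))) (x y : EuclideanSpace ℝ (Fin d)) : ℝ :=
  sInf { L : ℝ | ∃ γ : ℝ → EuclideanSpace ℝ (Fin d),
    ContDiffOn ℝ 1 γ (Set.Icc 0 1) ∧ γ 0 = x ∧ γ 1 = y ∧
    (∀ t ∈ Set.Icc (0 : ℝ) 1, γ t ∈ K) ∧
    (∀ t ∈ Set.Ioo (0 : ℝ) 1, γ t ∈ interior K) ∧
    L = pathLength F γ }

open Set

section AuxLemmas


variable {E' : Type*} [NormedAddCommGroup E'] [NormedSpace ℝ E']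

lemma diffAt_iteratedFDeriv {F : E' → ℝ} {U : Set E'} (hU : IsOpen U)
    (hF : ContDiffOn ℝ 3 F U) {n : ℕ} (hn : n < 3) {z : E'} (hz : z ∈ U) :
    DifferentiableAt ℝ (iteratedFDeriv ℝ n F) z := by
  have h1 : DifferentiableWithinAt ℝ (iteratedFDerivWithin ℝ n F U) U z :=
    hF.differentiableOn_iteratedFDerivWithin (by exact_mod_cast hn) hU.uniqueDiffOn z hz
  have h2 : DifferentiableAt ℝ (iteratedFDerivWithin ℝ n F U) z :=
    h1.differentiableAt (hU.mem_nhds hz)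
  have h3 : (iteratedFDerivWithin ℝ n F U) =ᶠ[nhds z] (iteratedFDeriv ℝ n F) := by
    filter_upwards [hU.mem_nhds hz] with w hw
    exact iteratedFDerivWithin_of_isOpen n hU hw
  exact h3.differentiableAt_iff.mp h2

lemma hasDerivAt_iFD_line {F : E' → ℝ} {U : Set E'} (hU : IsOpen U)
    (hF : ContDiffOn ℝ 3 F U) {n : ℕ} (hn : n < 3) (p h : E') {u : ℝ}
    (hu : p + u • h ∈ U) :
    HasDerivAt (fun v : ℝ => iteratedFDeriv ℝ n F (p + v • h) (fun _ => h))
      (iteratedFDeriv ℝ (n + 1) F (p + u • h) (fun _ => h)) u := by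
  set z := p + u • h
  have hc : HasDerivAt (fun v : ℝ => p + v • h) h u := by
    simpa using ((hasDerivAt_id u).smul_const h).const_add p
  have hd := (diffAt_iteratedFDeriv hU hF hn hu).hasFDerivAt
  have h1 : HasDerivAt (fun v : ℝ => iteratedFDeriv ℝ n F (p + v • h))
      (fderiv ℝ (iteratedFDeriv ℝ n F) z h) u := hd.comp_hasDerivAt u hc
  have h2 := ((ContinuousMultilinearMap.apply ℝ (fun _ : Fin n => E') ℝ
      (fun _ => h)).hasFDerivAt).comp_hasDerivAt u h1
  have h3 : (fderiv ℝ (iteratedFDeriv ℝ n F) z h) (fun _ => h)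
      = iteratedFDeriv ℝ (n + 1) F z (fun _ => h) := by
    rw [iteratedFDeriv_succ_apply_left]
    congr 1
  exact h3 ▸ h2


open Set in

lemma comparison_inv {ν : ℝ} (hν : 0 < ν) {G1 G2 : ℝ → ℝ} {u v : ℝ}
    (hu : u ∈ Ioo (0:ℝ) 1) (hv : v ∈ Ioo (0:ℝ) 1) (huv : u < v)
    (hd1 : ∀ τ ∈ Ioo (0:ℝ) 1, HasDerivAt G1 (G2 τ) τ)
    (hq : ∀ τ ∈ Ioo (0:ℝ) 1, (G1 τ)^2 ≤ ν * G2 τ)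
    (hpos : ∀ τ ∈ Icc u v, G1 τ ≠ 0) :
    (G1 v)⁻¹ + v / ν ≤ (G1 u)⁻¹ + u / ν := by
  have hsub : Icc u v ⊆ Ioo (0:ℝ) 1 := Icc_subset_Ioo hu.1 hv.2
  have hcont : ContinuousOn G1 (Icc u v) := fun τ hτ =>
    ((hd1 τ (hsub hτ)).continuousAt).continuousWithinAt
  have hanti : AntitoneOn (fun τ => (G1 τ)⁻¹ + τ / ν) (Icc u v) := by
    apply antitoneOn_of_deriv_nonpos (convex_Icc u v)
    · exact (hcont.inv₀ hpos).add (continuousOn_id.div_const ν)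
    · intro τ hτ
      rw [interior_Icc] at hτ
      have hτi := Ioo_subset_Icc_self hτ
      exact (((hd1 τ (hsub hτi)).inv (hpos τ hτi)).add
        ((hasDerivAt_id' τ).div_const ν)).differentiableAt.differentiableWithinAt
    · intro τ hτ
      rw [interior_Icc] at hτ
      have hτi := Ioo_subset_Icc_self hτ
      have hτ' := hsub hτi
      have hder := ((hd1 τ hτ').inv (hpos τ hτi)).add
        ((hasDerivAt_id' τ).div_const ν)
      rw [(show HasDerivAt (fun τ => (G1 τ)⁻¹ + τ / ν) _ τ from hder).deriv]
      have h1 : (G1 τ)^2 ≤ ν * G2 τ := hq τ hτ'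
      have h2' : 0 < (G1 τ)^2 := pow_pos (abs_pos.mpr (hpos τ hτi)) 2 |> fun h => by
        simpa [sq_abs] using h
      have h3 : (1:ℝ) / ν ≤ G2 τ / (G1 τ)^2 := by
        rw [div_le_div_iff₀ hν h2']
        nlinarith
      have h4 : -G2 τ / (G1 τ)^2 + 1/ν ≤ 0 := by
        have : -(G2 τ / (G1 τ)^2) + 1/ν ≤ 0 := by linarith
        simpa [neg_div] using this
      simpa [one_div] using h4
  exact hanti (left_mem_Icc.2 huv.le) (right_mem_Icc.2 huv.le) huv.le

lemma grad_bound {ν : ℝ} (hν : 0 < ν) {G1 G2 : ℝ → ℝ}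
    (hd1 : ∀ u ∈ Ioo (0:ℝ) 1, HasDerivAt G1 (G2 u) u)
    (h2 : ∀ u ∈ Ioo (0:ℝ) 1, 0 ≤ G2 u)
    (hq : ∀ u ∈ Ioo (0:ℝ) 1, (G1 u)^2 ≤ ν * G2 u) :
    ∀ u ∈ Ioo (0:ℝ) 1, ∀ v ∈ Ioo (0:ℝ) 1, G1 u * (v - u) ≤ ν := by
  intro u hu v hv
  rcases lt_trichotomy u v with huv | rfl | huv
  · rcases le_or_gt (G1 u) 0 with hP | hP
    · have : G1 u * (v - u) ≤ 0 := mul_nonpos_of_nonpos_of_nonneg hP (by linarith)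
      linarith
    · -- G1 is monotone on [u,v], hence positive there
      have hsub : Icc u v ⊆ Ioo (0:ℝ) 1 := Icc_subset_Ioo hu.1 hv.2
      have hcont : ContinuousOn G1 (Icc u v) := fun τ hτ =>
        ((hd1 τ (hsub hτ)).continuousAt).continuousWithinAt
      have hmono : MonotoneOn G1 (Icc u v) := by
        apply monotoneOn_of_deriv_nonneg (convex_Icc u v) hcont
        · intro τ hτ
          rw [interior_Icc] at hτ
          exact ((hd1 τ (hsub (Ioo_subset_Icc_self hτ))).differentiableAt).differentiableWithinAt
        · intro τ hτ
          rw [interior_Icc] at hτ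
          rw [(hd1 τ (hsub (Ioo_subset_Icc_self hτ))).deriv]
          exact h2 τ (hsub (Ioo_subset_Icc_self hτ))
      have hpos : ∀ τ ∈ Icc u v, 0 < G1 τ := fun τ hτ =>
        lt_of_lt_of_le hP (hmono (left_mem_Icc.2 huv.le) hτ hτ.1)
      have hcmp := comparison_inv hν hu hv huv hd1 hq (fun τ hτ => (hpos τ hτ).ne')
      have hvpos : 0 < G1 v := hpos v (right_mem_Icc.2 huv.le)
      have h5 : (v - u) / ν ≤ (G1 u)⁻¹ := by
        have : 0 < (G1 v)⁻¹ := inv_pos.2 hvpos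
        have := hcmp
        have huv' : (v - u)/ν = v/ν - u/ν := by ring
        linarith [inv_pos.2 hvpos]
      -- multiply
      rw [div_le_iff₀ hν] at h5
      calc G1 u * (v - u) ≤ (G1 u) * ((G1 u)⁻¹ * ν) := by
            apply mul_le_mul_of_nonneg_left h5 hP.le
        _ = ν := by field_simp
  · simpa using hν.le
  · rcases le_or_gt 0 (G1 u) with hP | hP
    · have : G1 u * (v - u) ≤ 0 := mul_nonpos_of_nonneg_of_nonpos hP (by linarith)
      linarith
    · have hsub : Icc v u ⊆ Ioo (0:ℝ) 1 := Icc_subset_Ioo hv.1 hu.2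
      have hcont : ContinuousOn G1 (Icc v u) := fun τ hτ =>
        ((hd1 τ (hsub hτ)).continuousAt).continuousWithinAt
      have hmono : MonotoneOn G1 (Icc v u) := by
        apply monotoneOn_of_deriv_nonneg (convex_Icc v u) hcont
        · intro τ hτ
          rw [interior_Icc] at hτ
          exact ((hd1 τ (hsub (Ioo_subset_Icc_self hτ))).differentiableAt).differentiableWithinAt
        · intro τ hτ
          rw [interior_Icc] at hτ
          rw [(hd1 τ (hsub (Ioo_subset_Icc_self hτ))).deriv]
          exact h2 τ (hsub (Ioo_subset_Icc_self hτ))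
      have hneg : ∀ τ ∈ Icc v u, G1 τ < 0 := fun τ hτ =>
        lt_of_le_of_lt (hmono hτ (right_mem_Icc.2 huv.le) hτ.2) hP
      have hcmp := comparison_inv hν hv hu huv hd1 hq (fun τ hτ => (hneg τ hτ).ne)
      have hvneg : G1 v < 0 := hneg v (left_mem_Icc.2 huv.le)
      have h5 : (u - v) / ν ≤ -(G1 u)⁻¹ := by
        have h6 : (G1 v)⁻¹ < 0 := inv_neg''.2 hvneg
        have hid : (u - v)/ν = u/ν - v/ν := by ring
        linarith
      rw [div_le_iff₀ hν] at h5
      have h7 : 0 < -(G1 u)⁻¹ := by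
        have := inv_neg''.2 hP; linarith
      have h8 : -G1 u * (u - v) ≤ -G1 u * (-(G1 u)⁻¹ * ν) := by
        apply mul_le_mul_of_nonneg_left h5 (by linarith)
      have h9 : -G1 u * (-(G1 u)⁻¹ * ν) = ν := by
        field_simp [hP.ne]
      nlinarith

lemma grad_bound_right {ν : ℝ} (hν : 0 < ν) {G1 G2 : ℝ → ℝ}
    (hd1 : ∀ u ∈ Ioo (0:ℝ) 1, HasDerivAt G1 (G2 u) u)
    (h2 : ∀ u ∈ Ioo (0:ℝ) 1, 0 ≤ G2 u)
    (hq : ∀ u ∈ Ioo (0:ℝ) 1, (G1 u)^2 ≤ ν * G2 u)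
    {u : ℝ} (hu : u ∈ Ioo (0:ℝ) 1) : G1 u * (1 - u) ≤ ν := by
  by_contra hcon
  push_neg at hcon
  have h1u : 0 < 1 - u := by linarith [hu.2]
  have hP : 0 < G1 u := by nlinarith
  set a := ν / G1 u with ha
  have hapos : 0 < a := div_pos hν hP
  have halt : a < 1 - u := by
    rw [ha, div_lt_iff₀ hP]; nlinarith
  set v := u + (a + (1 - u))/2 with hv
  have hv1 : v < 1 := by rw [hv]; linarith
  have hv0 : u < v := by rw [hv]; linarith
  have := grad_bound hν hd1 h2 hq u hu v ⟨by linarith [hu.1], hv1⟩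
  have hgt : ν < G1 u * (v - u) := by
    have : a < v - u := by rw [hv]; linarith
    calc ν = G1 u * a := by rw [ha]; field_simp
      _ < G1 u * (v - u) := by apply mul_lt_mul_of_pos_left this hP
  linarith

lemma grad_bound_left {ν : ℝ} (hν : 0 < ν) {G1 G2 : ℝ → ℝ}
    (hd1 : ∀ u ∈ Ioo (0:ℝ) 1, HasDerivAt G1 (G2 u) u)
    (h2 : ∀ u ∈ Ioo (0:ℝ) 1, 0 ≤ G2 u)
    (hq : ∀ u ∈ Ioo (0:ℝ) 1, (G1 u)^2 ≤ ν * G2 u)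
    {u : ℝ} (hu : u ∈ Ioo (0:ℝ) 1) : -(G1 u) * u ≤ ν := by
  by_contra hcon
  push_neg at hcon
  have hu0 := hu.1
  have hQ : 0 < -(G1 u) := by nlinarith
  set a := ν / (-(G1 u)) with ha
  have hapos : 0 < a := div_pos hν hQ
  have halt : a < u := by rw [ha, div_lt_iff₀ hQ]; nlinarith
  set v := (u - a)/2 with hv
  have hv0 : 0 < v := by rw [hv]; linarith
  have hvu : v < u := by rw [hv]; linarith
  have := grad_bound hν hd1 h2 hq u hu v ⟨hv0, by linarith [hu.2]⟩
  have hgt : ν < G1 u * (v - u) := by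
    have h6 : a < u - v := by rw [hv]; linarith
    have hne : G1 u ≠ 0 := by intro h0; rw [h0] at hQ; simp at hQ
    calc ν = -(G1 u) * a := by rw [ha]; field_simp
      _ < -(G1 u) * (u - v) := by apply mul_lt_mul_of_pos_left h6 hQ
      _ = G1 u * (v - u) := by ring
  linarith

lemma psi_bound {G2 G3 : ℝ → ℝ} {r b : ℝ}
    (hd2 : ∀ u ∈ Ioo (0:ℝ) 1, HasDerivAt G2 (G3 u) u)
    (h2 : ∀ u ∈ Ioo (0:ℝ) 1, 0 ≤ G2 u)
    (hsc : ∀ u ∈ Ioo (0:ℝ) 1, -(G3 u) ≤ 2 * G2 u * Real.sqrt (G2 u))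
    (hsub : Icc r b ⊆ Ioo (0:ℝ) 1) (hrb : r ≤ b)
    (hpos : ∀ u ∈ Icc r b, 0 < G2 u) :
    ∀ u ∈ Icc r b, (Real.sqrt (G2 u))⁻¹ ≤ (Real.sqrt (G2 r))⁻¹ + (u - r) := by
  have hder : ∀ τ ∈ Icc r b, HasDerivAt (fun τ => (Real.sqrt (G2 τ))⁻¹ - τ)
      (-(G3 τ / (2 * Real.sqrt (G2 τ))) / (Real.sqrt (G2 τ))^2 - 1) τ := by
    intro τ hτ
    have hττ := hsub hτ
    have hgpos := hpos τ hτ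
    have hs : (0:ℝ) < Real.sqrt (G2 τ) := Real.sqrt_pos.2 hgpos
    exact (((hd2 τ hττ).sqrt hgpos.ne').inv hs.ne').sub (hasDerivAt_id' τ)
  have hanti : AntitoneOn (fun τ => (Real.sqrt (G2 τ))⁻¹ - τ) (Icc r b) := by
    apply antitoneOn_of_deriv_nonpos (convex_Icc r b)
    · exact fun τ hτ => (hder τ hτ).continuousAt.continuousWithinAt
    · intro τ hτ
      rw [interior_Icc] at hτ
      exact (hder τ (Ioo_subset_Icc_self hτ)).differentiableAt.differentiableWithinAt
    · intro τ hτ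
      rw [interior_Icc] at hτ
      have hτi := Ioo_subset_Icc_self hτ
      rw [(hder τ hτi).deriv]
      have hττ := hsub hτi
      have hgpos := hpos τ hτi
      have hs : (0:ℝ) < Real.sqrt (G2 τ) := Real.sqrt_pos.2 hgpos
      have hsq : (Real.sqrt (G2 τ))^2 = G2 τ := Real.sq_sqrt hgpos.le
      have hkey : -(G3 τ / (2 * Real.sqrt (G2 τ))) / (Real.sqrt (G2 τ))^2 ≤ 1 := by
        rw [hsq, div_le_one hgpos]
        have h7 : -(G3 τ / (2 * Real.sqrt (G2 τ))) = (-(G3 τ)) / (2 * Real.sqrt (G2 τ)) :=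
          (neg_div _ _).symm
        rw [h7, div_le_iff₀ (by positivity)]
        calc -(G3 τ) ≤ 2 * G2 τ * Real.sqrt (G2 τ) := hsc τ hττ
          _ = G2 τ * (2 * Real.sqrt (G2 τ)) := by ring
      linarith
  intro u hu
  have := hanti (left_mem_Icc.2 hrb) hu hu.1
  simp only at this
  linarith

lemma hess_lower {G2 G3 : ℝ → ℝ}
    (hd2 : ∀ u ∈ Ioo (0:ℝ) 1, HasDerivAt G2 (G3 u) u)
    (h2 : ∀ u ∈ Ioo (0:ℝ) 1, 0 ≤ G2 u)
    (hsc : ∀ u ∈ Ioo (0:ℝ) 1, -(G3 u) ≤ 2 * G2 u * Real.sqrt (G2 u))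
    {r e : ℝ} (hr : r ∈ Ioo (0:ℝ) 1) (hre : r + e ∈ Ioo (0:ℝ) 1)
    (he : 0 < e) (hw : 0 < G2 r) (hee : e * Real.sqrt (G2 r) ≤ 1) :
    ∀ u ∈ Icc r (r + e), G2 r / 4 ≤ G2 u := by
  set w := Real.sqrt (G2 r) with hwdef
  have hwpos : 0 < w := Real.sqrt_pos.2 hw
  have hw2 : w^2 = G2 r := Real.sq_sqrt hw.le
  have hsubfull : Icc r (r + e) ⊆ Ioo (0:ℝ) 1 := Icc_subset_Ioo hr.1 hre.2
  have hcont : ContinuousOn G2 (Icc r (r + e)) := fun τ hτ =>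
    (hd2 τ (hsubfull hτ)).continuousAt.continuousWithinAt
  -- main step: if G2 > 0 on Icc r b, then G2 ≥ G2 r / 4 on Icc r b
  have main : ∀ b, r ≤ b → b ≤ r + e → (∀ u ∈ Icc r b, 0 < G2 u) →
      ∀ u ∈ Icc r b, G2 r / 4 ≤ G2 u := by
    intro b hrb hble hpos u hu
    have hsub : Icc r b ⊆ Ioo (0:ℝ) 1 := (Icc_subset_Icc le_rfl hble).trans hsubfull
    have hψ := psi_bound hd2 h2 hsc hsub hrb hpos u hu
    have hgu : 0 < G2 u := hpos u hu
    have hsu : 0 < Real.sqrt (G2 u) := Real.sqrt_pos.2 hgu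
    have h2w : (Real.sqrt (G2 u))⁻¹ ≤ 2 / w := by
      have h1 : u - r ≤ e := by linarith [hu.2]
      have h2' : e ≤ 1 / w := by rw [le_div_iff₀ hwpos]; exact hee
      have h3 : (Real.sqrt (G2 r))⁻¹ = 1 / w := by rw [one_div]
      calc (Real.sqrt (G2 u))⁻¹ ≤ (Real.sqrt (G2 r))⁻¹ + (u - r) := hψ
        _ ≤ 1/w + 1/w := by rw [h3]; linarith
        _ = 2 / w := by ring
    have h4 : w ≤ 2 * Real.sqrt (G2 u) := by
      have h5 := mul_le_mul_of_nonneg_left h2w hsu.le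
      rw [mul_inv_cancel₀ hsu.ne'] at h5
      rw [← sub_nonneg]
      have h6 : Real.sqrt (G2 u) * (2 / w) = 2 * Real.sqrt (G2 u) / w := by ring
      rw [h6, le_div_iff₀ hwpos, one_mul] at h5
      linarith
    nlinarith [Real.sq_sqrt hgu.le]
  -- bootstrap positivity
  by_cases hS : ∃ u ∈ Icc r (r + e), G2 u ≤ G2 r / 9
  · exfalso
    set S := {u | u ∈ Icc r (r + e) ∧ G2 u ≤ G2 r / 9} with hSdef
    have hSne : S.Nonempty := by
      obtain ⟨u, hu1, hu2⟩ := hS; exact ⟨u, hu1, hu2⟩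
    have hSclosed : IsClosed S := by
      have : S = Icc r (r + e) ∩ G2 ⁻¹' (Iic (G2 r / 9)) := rfl
      rw [this]
      exact hcont.preimage_isClosed_of_isClosed isClosed_Icc isClosed_Iic
    have hSbdd : BddBelow S := ⟨r, fun u hu => hu.1.1⟩
    set b := sInf S with hbdef
    have hbS : b ∈ S := hSclosed.csInf_mem hSne hSbdd
    have hbIcc : b ∈ Icc r (r + e) := hbS.1
    have hbb : G2 b ≤ G2 r / 9 := hbS.2
    have hrb : r < b := by
      rcases eq_or_lt_of_le hbIcc.1 with h | h
      · exfalso; rw [← h] at hbb; linarith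
      · exact h
    have hposlt : ∀ v ∈ Ico r b, G2 r / 9 < G2 v := by
      intro v hv
      by_contra hcon
      push_neg at hcon
      have : v ∈ S := ⟨⟨hv.1, by linarith [hv.2, hbIcc.2]⟩, hcon⟩
      have := csInf_le hSbdd this
      linarith [hv.2]
    -- G2 b ≥ G2 r / 9 by continuity
    have hb9 : G2 r / 9 ≤ G2 b := by
      have htend : Filter.Tendsto G2 (nhdsWithin b (Iio b)) (nhds (G2 b)) :=
        ((hd2 b (hsubfull hbIcc)).continuousAt.continuousWithinAt).tendsto
      refine ge_of_tendsto htend ?_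
      filter_upwards [Ico_mem_nhdsLT hrb] with v hv
      exact (hposlt v hv).le
    have hposb : ∀ u ∈ Icc r b, 0 < G2 u := by
      intro u hu
      rcases eq_or_lt_of_le hu.2 with h | h
      · rw [h]; linarith
      · exact lt_trans (by linarith) (hposlt u ⟨hu.1, h⟩)
    have := main b hrb.le hbIcc.2 hposb b (right_mem_Icc.2 hrb.le)
    linarith
  · push_neg at hS
    exact main (r + e) (by linarith) le_rfl
      (fun u hu => lt_of_lt_of_le (by linarith) (le_of_lt (hS u hu))) 

lemma sqrt_hess_bound {ν : ℝ} (hν : 1 ≤ ν) {G1 G2 G3 : ℝ → ℝ}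
    (hd1 : ∀ u ∈ Ioo (0:ℝ) 1, HasDerivAt G1 (G2 u) u)
    (hd2 : ∀ u ∈ Ioo (0:ℝ) 1, HasDerivAt G2 (G3 u) u)
    (h2 : ∀ u ∈ Ioo (0:ℝ) 1, 0 ≤ G2 u)
    (hq : ∀ u ∈ Ioo (0:ℝ) 1, (G1 u)^2 ≤ ν * G2 u)
    (hsc : ∀ u ∈ Ioo (0:ℝ) 1, -(G3 u) ≤ 2 * G2 u * Real.sqrt (G2 u))
    {r : ℝ} (hr : r ∈ Ioo (0:ℝ) 1) :
    Real.sqrt (G2 r) ≤ (2 + 6 * ν) * (1/r + 1/(1 - r)) := by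
  have hν0 : (0:ℝ) < ν := by linarith
  have hr0 : 0 < r := hr.1
  have hr1 : 0 < 1 - r := by linarith [hr.2]
  set w := Real.sqrt (G2 r) with hwdef
  have hwnn : 0 ≤ w := Real.sqrt_nonneg _
  rcases le_or_gt w (3 / (1 - r)) with hcase | hcase
  · calc w ≤ 3 / (1 - r) := hcase
      _ ≤ (2 + 6*ν) * (1/r + 1/(1-r)) := by
        have h1 : 0 < 1/r := by positivity
        have h2' : 3 / (1-r) ≤ (2+6*ν) * (1/(1-r)) := by
          rw [div_le_iff₀ hr1]
          have : (2+6*ν) * (1/(1-r)) * (1-r) = 2+6*ν := by field_simp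
          rw [this]; linarith
        have h3 : 0 ≤ (2+6*ν) * (1/r) := by positivity
        nlinarith
  · have hwpos : 0 < w := lt_trans (by positivity) hcase
    have hgpos : 0 < G2 r := by
      rcases (h2 r hr).lt_or_eq with h | h
      · exact h
      · exfalso; rw [hwdef, ← h, Real.sqrt_zero] at hwpos; linarith
    set e := w⁻¹ with hedef
    have hepos : 0 < e := inv_pos.2 hwpos
    have helt : e < (1 - r)/3 := by
      have h4 : (3:ℝ) / (1-r) * ((1-r)/3) = 1 := by field_simp
      have h5 := mul_lt_mul_of_pos_right hcase (show (0:ℝ) < (1-r)/3 by positivity)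
      rw [h4] at h5
      rw [hedef, inv_lt_iff_one_lt_mul₀ hwpos]
      linarith [mul_comm w ((1-r)/3)]
    have hre : r + e ∈ Ioo (0:ℝ) 1 := ⟨by linarith, by linarith⟩
    have hee : e * w ≤ 1 := by rw [hedef, inv_mul_cancel₀ hwpos.ne']
    have hlow := hess_lower hd2 h2 hsc hr hre hepos hgpos (by rw [← hwdef]; exact hee)
    have hw2 : w^2 = G2 r := Real.sq_sqrt (h2 r hr)
    -- monotone : G1 (r+e) - G1 r ≥ (w^2/4) e = w/4
    have hsub : Icc r (r+e) ⊆ Ioo (0:ℝ) 1 := Icc_subset_Ioo hr0 hre.2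
    have hmono : MonotoneOn (fun τ => G1 τ - (w^2/4) * τ) (Icc r (r+e)) := by
      apply monotoneOn_of_deriv_nonneg (convex_Icc _ _)
      · intro τ hτ
        exact (((hd1 τ (hsub hτ)).sub ((hasDerivAt_id' τ).const_mul
          (w^2/4))).continuousAt).continuousWithinAt
      · intro τ hτ
        rw [interior_Icc] at hτ
        have hτi := Ioo_subset_Icc_self hτ
        exact ((hd1 τ (hsub hτi)).sub ((hasDerivAt_id' τ).const_mul
          (w^2/4))).differentiableAt.differentiableWithinAt
      · intro τ hτ
        rw [interior_Icc] at hτ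
        have hτi := Ioo_subset_Icc_self hτ
        rw [(show HasDerivAt (fun τ => G1 τ - w ^ 2 / 4 * τ) _ τ from
          (hd1 τ (hsub hτi)).sub ((hasDerivAt_id' τ).const_mul (w^2/4))).deriv]
        have := hlow τ hτi
        rw [← hw2] at this
        linarith
    have hgain : w/4 ≤ G1 (r+e) - G1 r := by
      have h5 := hmono (left_mem_Icc.2 (by linarith)) (right_mem_Icc.2 (by linarith))
        (by linarith : r ≤ r + e)
      simp only at h5
      have h6 : w^2/4 * (r+e) - w^2/4 * r = w^2 * e / 4 := by ring
      have h7 : w^2 * e = w := by rw [hedef]; field_simp [hwpos.ne']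
      nlinarith
    have hgb1 := grad_bound_right hν0 hd1 h2 hq hre
    have hgb2 := grad_bound_left hν0 hd1 h2 hq hr
    -- 1 - (r+e) ≥ (2/3)(1-r)
    have h8 : (2/3) * (1-r) ≤ 1 - (r+e) := by linarith
    have h9 : 0 < 1 - (r+e) := by linarith
    have h10 : G1 (r+e) ≤ ν / (1 - (r+e)) := by
      rw [le_div_iff₀ h9]
      linarith [hgb1]
    have h11 : ν / (1 - (r+e)) ≤ (3/2) * ν / (1-r) := by
      rw [div_le_div_iff₀ h9 hr1]
      nlinarith
    have h12 : -(G1 r) ≤ ν / r := by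
      rw [le_div_iff₀ hr0]; linarith [hgb2]
    have h13 : w/4 ≤ (3/2)*ν/(1-r) + ν/r := by linarith
    have h14 : (3/2)*ν/(1-r) ≤ (3/2)*ν * (1/(1-r)) := by
      rw [div_eq_mul_inv, one_div]
    have h15 : ν/r = ν * (1/r) := by rw [div_eq_mul_inv, one_div]
    have h16 : 0 < 1/r := by positivity
    have h17 : 0 < 1/(1-r) := by positivity
    nlinarith

end AuxLemmas

/-- for distinct `x, y ∈ int K`, with `p, q` the endpoints on the boundary of
`K` of the chord of `K` through `x` and `y` ordered so that `p, x, y, q` appear in that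
order, the Riemannian distance induced by a `ν`-self-concordant barrier is bounded by the
Hilbert metric: `ρ(x, y) ≤ 2(1 + 3ν)·ln(1 + σ(x, y))`, where
`σ(x, y) = (|x − y|·|p − q|)/(|p − x|·|q − y|)`; in particular
`ρ(x, y) ≤ 2(1 + 3ν)·σ(x, y)`. -/
theorem riemann_dist_le_hilbert_metric
    {d : ℕ} (K : Set (EuclideanSpace ℝ (Fin d)))
    (hKcomp : IsCompact K) (hKconv : Convex ℝ K) (hKint : (interior K).Nonempty)
    (F : EuclideanSpace ℝ (Fin d) → ℝ) (ν : ℝ) (hν : 1 ≤ ν)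
    (hFsmooth : ContDiffOn ℝ 3 F (interior K))
    (hFconv : ConvexOn ℝ (interior K) F)
    (hFbarrier : ∀ x ∉ interior K, ∀ u : ℕ → EuclideanSpace ℝ (Fin d),
      (∀ n, u n ∈ interior K) → Tendsto u atTop (nhds x) →
        Tendsto (fun n => F (u n)) atTop atTop)
    (hFsc : ∀ x ∈ interior K, ∀ h : EuclideanSpace ℝ (Fin d),
      iteratedFDeriv ℝ 3 F x ![h, h, h] ≤
        2 * (iteratedFDeriv ℝ 2 F x ![h, h]) ^ ((3 : ℝ) / 2))
    (hFν : ∀ x ∈ interior K, ∀ h : EuclideanSpace ℝ (Fin d),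
      (fderiv ℝ F x h) ^ 2 ≤ ν * iteratedFDeriv ℝ 2 F x ![h, h])
    (x y : EuclideanSpace ℝ (Fin d))
    (hx : x ∈ interior K) (hy : y ∈ interior K) (hxy : x ≠ y)
    (p q : EuclideanSpace ℝ (Fin d))
    (hp : p ∈ frontier K) (hq : q ∈ frontier K)
    (s t : ℝ) (hs : 0 < s) (hst : s < t) (ht : t < 1)
    (hxs : x = p + s • (q - p)) (hyt : y = p + t • (q - p)) :
    riemannDist F K x y ≤
      2 * (1 + 3 * ν) *
        Real.log (1 + ‖x - y‖ * ‖p - q‖ / (‖p - x‖ * ‖q - y‖)) ∧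
    riemannDist F K x y ≤
      2 * (1 + 3 * ν) * (‖x - y‖ * ‖p - q‖ / (‖p - x‖ * ‖q - y‖)) := by
  have hν0 : (0:ℝ) < ν := by linarith
  have hts : (0:ℝ) < t - s := by linarith
  have ht1 : (0:ℝ) < 1 - t := by linarith
  have hyx : y - x = (t - s) • (q - p) := by rw [hxs, hyt]; module
  have hh : (q - p) ≠ 0 := by
    intro h0
    apply hxy
    rw [h0, smul_zero] at hyx
    have : y = x := by rwa [sub_eq_zero] at hyx
    exact this.symm
  have hnh : (0:ℝ) < ‖q - p‖ := norm_pos_iff.mpr hh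
  -- interior membership along the chord
  have hcU : ∀ u ∈ Ioo (0:ℝ) 1, p + u • (q - p) ∈ interior K := by
    intro u hu
    have hpc : p ∈ closure K := frontier_subset_closure hp
    have hqc : q ∈ closure K := frontier_subset_closure hq
    rcases le_or_gt u s with hus | hus
    · have key : (u/s) • x + (1 - u/s) • p = p + u • (q - p) := by
        rw [hxs]; match_scalars <;> field_simp <;> ring
      rw [← key]
      exact Convex.combo_interior_closure_mem_interior hKconv hx hpc
        (div_pos hu.1 hs) (by rw [sub_nonneg, div_le_one hs]; exact hus) (by ring)
    · have h1s : 0 < 1 - s := by linarith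
      have key : (1 - (u-s)/(1-s)) • x + ((u-s)/(1-s)) • q = p + u • (q - p) := by
        rw [hxs]; match_scalars <;> field_simp <;> ring
      rw [← key]
      refine Convex.combo_interior_closure_mem_interior hKconv hx hqc ?_ ?_ (by ring)
      · rw [sub_pos, div_lt_one h1s]; linarith [hu.2]
      · exact div_nonneg (by linarith) h1s.le
  -- the directional derivatives along the chord
  set G1 : ℝ → ℝ := fun u => iteratedFDeriv ℝ 1 F (p + u • (q - p)) (fun _ => q - p) with hG1
  set G2 : ℝ → ℝ := fun u => iteratedFDeriv ℝ 2 F (p + u • (q - p)) (fun _ => q - p) with hG2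
  set G3 : ℝ → ℝ := fun u => iteratedFDeriv ℝ 3 F (p + u • (q - p)) (fun _ => q - p) with hG3
  have hd1 : ∀ u ∈ Ioo (0:ℝ) 1, HasDerivAt G1 (G2 u) u := fun u hu =>
    hasDerivAt_iFD_line isOpen_interior hFsmooth (by norm_num) p (q - p) (hcU u hu)
  have hd2 : ∀ u ∈ Ioo (0:ℝ) 1, HasDerivAt G2 (G3 u) u := fun u hu =>
    hasDerivAt_iFD_line isOpen_interior hFsmooth (by norm_num) p (q - p) (hcU u hu)
  have e2 : ∀ z : EuclideanSpace ℝ (Fin d),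
      (iteratedFDeriv ℝ 2 F z) ![q - p, q - p] = (iteratedFDeriv ℝ 2 F z) (fun _ => q - p) := by
    intro z; congr 1; funext i; fin_cases i <;> rfl
  have hq' : ∀ u ∈ Ioo (0:ℝ) 1, (G1 u)^2 ≤ ν * G2 u := by
    intro u hu
    have := hFν _ (hcU u hu) (q - p)
    rw [e2] at this
    rw [hG1]
    simpa [iteratedFDeriv_one_apply] using this
  have h2 : ∀ u ∈ Ioo (0:ℝ) 1, 0 ≤ G2 u := by
    intro u hu
    have h1 := hq' u hu
    nlinarith [sq_nonneg (G1 u)]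
  have hsc' : ∀ u ∈ Ioo (0:ℝ) 1, -(G3 u) ≤ 2 * G2 u * Real.sqrt (G2 u) := by
    intro u hu
    have h3 := hFsc _ (hcU u hu) (-(q - p))
    have hA : (iteratedFDeriv ℝ 3 F (p + u • (q - p))) ![-(q-p), -(q-p), -(q-p)]
        = -(G3 u) := by
      have h1 : ![-(q-p), -(q-p), -(q-p)]
          = fun i : Fin 3 => (-1:ℝ) • ((fun _ : Fin 3 => (q-p)) i) := by
        funext i; fin_cases i <;> simp
      rw [h1, ContinuousMultilinearMap.map_smul_univ]
      norm_num [hG3]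
    have hB : (iteratedFDeriv ℝ 2 F (p + u • (q - p))) ![-(q-p), -(q-p)] = G2 u := by
      have h1 : ![-(q-p), -(q-p)]
          = fun i : Fin 2 => (-1:ℝ) • ((fun _ : Fin 2 => (q-p)) i) := by
        funext i; fin_cases i <;> simp
      rw [h1, ContinuousMultilinearMap.map_smul_univ]
      norm_num [hG2]
    rw [hA, hB] at h3
    have hrpow : 2 * (G2 u) ^ ((3:ℝ)/2) = 2 * G2 u * Real.sqrt (G2 u) := by
      rcases (h2 u hu).lt_or_eq with hgt | heq
      · rw [show ((3:ℝ)/2) = 1 + 1/2 by norm_num, Real.rpow_add hgt, Real.rpow_one,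
          ← Real.sqrt_eq_rpow]
        ring
      · rw [← heq, Real.zero_rpow (by norm_num), Real.sqrt_zero]; ring
    linarith [hrpow ▸ h3]
  have hbound : ∀ r ∈ Ioo (0:ℝ) 1,
      Real.sqrt (G2 r) ≤ (2 + 6 * ν) * (1/r + 1/(1 - r)) :=
    fun r hr => sqrt_hess_bound hν hd1 hd2 h2 hq' hsc' hr
  -- the straight path from x to y
  set γ : ℝ → EuclideanSpace ℝ (Fin d) := fun u => x + u • (y - x) with hγdef
  have hdγ : ∀ u : ℝ, HasDerivAt γ (y - x) u := by
    intro u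
    simpa [hγdef] using ((hasDerivAt_id u).smul_const (y - x)).const_add x
  have hγ0 : γ 0 = x := by simp [hγdef]
  have hγ1 : γ 1 = y := by simp [hγdef]
  have hγint : ∀ u ∈ Icc (0:ℝ) 1, γ u ∈ interior K := by
    intro u hu
    have key : (1 - u) • x + u • y = γ u := by simp only [hγdef]; module
    rw [← key]
    exact hKconv.interior hx hy (by linarith [hu.2]) hu.1 (by ring)
  have hγc : ∀ u : ℝ, γ u = p + ((t-s)*u + s) • (q - p) := by
    intro u
    simp only [hγdef]
    rw [hyx, hxs]
    module
  have hlocal : ∀ u : ℝ,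
      localNorm F (γ u) (deriv γ u) = (t-s) * Real.sqrt (G2 ((t-s)*u + s)) := by
    intro u
    rw [(hdγ u).deriv, localNorm, hγc u, hyx]
    have hsm : (iteratedFDeriv ℝ 2 F (p + ((t-s)*u + s) • (q-p)))
        ![(t-s) • (q-p), (t-s) • (q-p)] = (t-s)^2 * G2 ((t-s)*u + s) := by
      have h1 : ![(t-s) • (q-p), (t-s) • (q-p)]
          = fun i : Fin 2 => (t-s) • ((fun _ : Fin 2 => (q-p)) i) := by
        funext i; fin_cases i <;> rfl
      rw [h1, ContinuousMultilinearMap.map_smul_univ]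
      simp [hG2, smul_eq_mul, sq]
    rw [hsm, Real.sqrt_mul (sq_nonneg _), Real.sqrt_sq hts.le]
  -- pathLength equals ∫ s..t √(G2)
  have hPL : pathLength F γ = ∫ v in s..t, Real.sqrt (G2 v) := by
    rw [pathLength]
    simp only [hlocal]
    rw [MeasureTheory.integral_Icc_eq_integral_Ioc,
      ← intervalIntegral.integral_of_le (zero_le_one)]
    rw [intervalIntegral.integral_const_mul]
    have := intervalIntegral.integral_comp_mul_add (a := 0) (b := 1)
      (fun v => Real.sqrt (G2 v)) hts.ne' s
    rw [this]
    norm_num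
    rw [← mul_assoc, mul_inv_cancel₀ hts.ne', one_mul]
  -- integrability and comparison
  have hIooST : Icc s t ⊆ Ioo (0:ℝ) 1 := fun v hv =>
    ⟨lt_of_lt_of_le hs hv.1, lt_of_le_of_lt hv.2 ht⟩
  have hcontL : ContinuousOn (fun v => Real.sqrt (G2 v)) (Icc s t) := fun v hv =>
    (Real.continuous_sqrt.continuousAt.comp
      (hd2 v (hIooST hv)).continuousAt).continuousWithinAt
  have hcontR : ContinuousOn (fun v => (2+6*ν) * (1/v + 1/(1-v))) (Icc s t) := by
    apply ContinuousOn.mul continuousOn_const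
    apply ContinuousOn.add
    · exact continuousOn_const.div continuousOn_id
        (fun v hv => ne_of_gt (lt_of_lt_of_le hs hv.1))
    · exact continuousOn_const.div (continuousOn_const.sub continuousOn_id)
        (fun v hv => ne_of_gt (by linarith [hv.2] : (0:ℝ) < 1 - v))
  have hintL : IntervalIntegrable (fun v => Real.sqrt (G2 v)) volume s t := by
    apply ContinuousOn.intervalIntegrable; rwa [Set.uIcc_of_le hst.le]
  have hintR : IntervalIntegrable (fun v => (2+6*ν) * (1/v + 1/(1-v))) volume s t := by
    apply ContinuousOn.intervalIntegrable; rwa [Set.uIcc_of_le hst.le]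
  have hIle : (∫ v in s..t, Real.sqrt (G2 v)) ≤ ∫ v in s..t, (2+6*ν)*(1/v + 1/(1-v)) :=
    intervalIntegral.integral_mono_on hst.le hintL hintR
      (fun v hv => hbound v (hIooST hv))
  have hint1 : IntervalIntegrable (fun v => 1/v) volume s t := by
    apply ContinuousOn.intervalIntegrable
    rw [Set.uIcc_of_le hst.le]
    exact continuousOn_const.div continuousOn_id
      (fun v hv => ne_of_gt (lt_of_lt_of_le hs hv.1))
  have hint2 : IntervalIntegrable (fun v => 1/(1-v)) volume s t := by
    apply ContinuousOn.intervalIntegrable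
    rw [Set.uIcc_of_le hst.le]
    exact continuousOn_const.div (continuousOn_const.sub continuousOn_id)
      (fun v hv => ne_of_gt (by linarith [hv.2] : (0:ℝ) < 1 - v))
  have hJ : (∫ v in s..t, (2+6*ν)*(1/v + 1/(1-v)))
      = (2+6*ν) * (Real.log (t/s) + Real.log ((1-s)/(1-t))) := by
    rw [intervalIntegral.integral_const_mul]
    congr 1
    rw [intervalIntegral.integral_add hint1 hint2]
    congr 1
    · apply integral_one_div
      rw [Set.uIcc_of_le hst.le]
      rintro ⟨h1', h2'⟩; linarith
    · have heq : (fun v => (1:ℝ)/(1-v)) = fun v => (fun z => (1:ℝ)/z) (-1*v+1) := by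
        funext v; ring_nf
      rw [heq]
      rw [intervalIntegral.integral_comp_mul_add (a := s) (b := t)
        (fun z => (1:ℝ)/z) (by norm_num : (-1:ℝ) ≠ 0) 1]
      have h01 : (0:ℝ) ∉ Set.uIcc (-1*s+1) (-1*t+1) := by
        rw [Set.uIcc_of_ge (by linarith : -1*t+1 ≤ -1*s+1)]
        rintro ⟨h1', h2'⟩; linarith
      rw [integral_one_div h01, smul_eq_mul]
      rw [show (-1*t+1 : ℝ) = 1 - t by ring, show (-1*s+1 : ℝ) = 1 - s by ring]
      rw [Real.log_div (by linarith) (by linarith),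
        Real.log_div (by linarith) (by linarith)]
      ring
  -- σ computations
  have hxmy : x - y = (s - t) • (q - p) := by rw [hxs, hyt]; module
  have hpmx : p - x = (-s) • (q - p) := by rw [hxs]; module
  have hqmy : q - y = (1 - t) • (q - p) := by rw [hyt]; module
  have hn1 : ‖x - y‖ = (t - s) * ‖q - p‖ := by
    rw [hxmy, norm_smul, Real.norm_eq_abs, abs_of_neg (by linarith : s - t < 0)]; ring
  have hn2 : ‖p - q‖ = ‖q - p‖ := norm_sub_rev p q
  have hn3 : ‖p - x‖ = s * ‖q - p‖ := by
    rw [hpmx, norm_smul, Real.norm_eq_abs, abs_of_neg (by linarith : -s < 0)]; ring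
  have hn4 : ‖q - y‖ = (1 - t) * ‖q - p‖ := by
    rw [hqmy, norm_smul, Real.norm_eq_abs, abs_of_pos ht1]
  set σv : ℝ := (t - s)/(s * (1 - t)) with hσdef
  have hσ : ‖x - y‖ * ‖p - q‖ / (‖p - x‖ * ‖q - y‖) = σv := by
    rw [hn1, hn2, hn3, hn4, hσdef]
    field_simp
  have hσpos : 0 < σv := by
    rw [hσdef]; apply div_pos hts (by positivity)
  have hlogid : Real.log (t/s) + Real.log ((1-s)/(1-t)) = Real.log (1 + σv) := by
    rw [← Real.log_mul (ne_of_gt (div_pos (by linarith) hs))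
      (ne_of_gt (div_pos (by linarith) (by linarith)))]
    congr 1
    rw [hσdef]; field_simp; ring
  -- riemannDist ≤ pathLength
  have hγsm : ContDiffOn ℝ 1 γ (Icc 0 1) :=
    (contDiff_const.add (contDiff_id.smul contDiff_const)).contDiffOn
  have hle : riemannDist F K x y ≤ pathLength F γ := by
    apply csInf_le
    · refine ⟨0, fun L hL => ?_⟩
      obtain ⟨γ', _, _, _, _, _, rfl⟩ := hL
      simp only [pathLength, localNorm]
      exact integral_nonneg (fun u => Real.sqrt_nonneg _)
    · exact ⟨γ, hγsm, hγ0, hγ1, fun u hu => interior_subset (hγint u hu),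
        fun u hu => hγint u (Ioo_subset_Icc_self hu), rfl⟩
  have hmain : riemannDist F K x y ≤ 2*(1+3*ν) * Real.log (1 + σv) := by
    calc riemannDist F K x y ≤ pathLength F γ := hle
      _ = ∫ v in s..t, Real.sqrt (G2 v) := hPL
      _ ≤ ∫ v in s..t, (2+6*ν)*(1/v + 1/(1-v)) := hIle
      _ = (2+6*ν) * (Real.log (t/s) + Real.log ((1-s)/(1-t))) := hJ
      _ = 2*(1+3*ν) * Real.log (1 + σv) := by rw [hlogid]; ring
  constructor
  · rw [hσ]; exact hmain
  · rw [hσ]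
    have hlog : Real.log (1 + σv) ≤ σv := by
      have := Real.log_le_sub_one_of_pos (by linarith : (0:ℝ) < 1 + σv)
      linarith
    calc riemannDist F K x y ≤ 2*(1+3*ν) * Real.log (1 + σv) := hmain
      _ ≤ 2*(1+3*ν) * σv := by
        apply mul_le_mul_of_nonneg_left hlog (by positivity)
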